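/- arXiv:1301.4272 — 2 statements merged into one kernel-verified Lean document; each statement's English description precedes it below -/
import Mathlib

section
/- ΦΨ-completeness of approximate view-based propagators: let c ⊆ (Fin k → ℤ) be a constraint, f : (Fin n → ℤ) → (Fin k → ℤ) a function, and let Φ, Ψ : Set (Fin n → ℤ) → Set (Fin n → ℤ) be closure operators (extensive, monotone, idempotent). Then for every tuple set S ⊆ (Fin n → ℤ), the ΦΨ view-based propagator output Ψ(f⁻¹(c ∩ f '' (Φ S)) ∩ Φ S) ∩ S is contained in Ψ(f⁻¹(c) ∩ Φ S); that is, the propagator is ΦΨ-complete for the composed constraint c∘f with solution set f⁻¹(c). -/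
theorem viewProp_phiPsi_complete {n k : ℕ} (c : Set (Fin k → ℤ))
    (f : (Fin n → ℤ) → (Fin k → ℤ))
    (Φ Ψ : Set (Fin n → ℤ) → Set (Fin n → ℤ))
    (hΦext : ∀ S, S ⊆ Φ S) (hΦmono : ∀ S T, S ⊆ T → Φ S ⊆ Φ T)
    (hΦidem : ∀ S, Φ (Φ S) = Φ S)
    (hΨext : ∀ S, S ⊆ Ψ S) (hΨmono : ∀ S T, S ⊆ T → Ψ S ⊆ Ψ T)
    (hΨidem : ∀ S, Ψ (Ψ S) = Ψ S) :
    ∀ S : Set (Fin n → ℤ),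
      Ψ (f ⁻¹' (c ∩ f '' Φ S) ∩ Φ S) ∩ S ⊆ Ψ (f ⁻¹' c ∩ Φ S) := by
  intro S x hx
  refine hΨmono _ _ ?_ hx.1
  intro y hy
  exact ⟨hy.1.1, hy.2⟩
end

section
/- Soundness of approximate view-based propagators: let c ⊆ (Fin k → ℤ) be a constraint, f : (Fin n → ℤ) → (Fin k → ℤ) a function, and let Φ, Ψ : Set (Fin n → ℤ) → Set (Fin n → ℤ) be extensive and monotone operators (S ⊆ Φ S, S ⊆ Ψ S, and both preserve ⊆). Then for every tuple set S ⊆ (Fin n → ℤ), the solutions of the composed constraint in S are never removed: f⁻¹(c) ∩ S ⊆ Ψ(f⁻¹(c ∩ f '' (Φ S)) ∩ Φ S) ∩ S. Moreover the propagator is contracting: Ψ(f⁻¹(c ∩ f '' (Φ S)) ∩ Φ S) ∩ S ⊆ S. -/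
theorem viewProp_sound_contracting {n k : ℕ} (c : Set (Fin k → ℤ))
    (f : (Fin n → ℤ) → (Fin k → ℤ))
    (Φ Ψ : Set (Fin n → ℤ) → Set (Fin n → ℤ))
    (hΦext : ∀ S, S ⊆ Φ S) (hΦmono : ∀ S T, S ⊆ T → Φ S ⊆ Φ T)
    (hΨext : ∀ S, S ⊆ Ψ S) (hΨmono : ∀ S T, S ⊆ T → Ψ S ⊆ Ψ T) :
    ∀ S : Set (Fin n → ℤ),
      (f ⁻¹' c ∩ S ⊆ Ψ (f ⁻¹' (c ∩ f '' Φ S) ∩ Φ S) ∩ S) ∧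
      (Ψ (f ⁻¹' (c ∩ f '' Φ S) ∩ Φ S) ∩ S ⊆ S) := by
  intro S
  refine ⟨fun x hx => ⟨hΨext _ ⟨⟨hx.1, ⟨x, hΦext S hx.2, rfl⟩⟩, hΦext S hx.2⟩, hx.2⟩,
    fun x hx => hx.2⟩
end
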